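/- Consider p vehicles in a line with discrete double-integrator dynamics, step τ, speed bound v_max, braking limit u_b < 0 and acceleration limit u_max > 0. If the horizon satisfies K·τ ≥ v_max/|u_b| + (p−1)·(1 + ⌈u_max/|u_b|⌉)·τ + τ, and there exists an admissible collision-free control over K steps, then there exists an admissible collision-free control with the same first-step controls under which every vehicle has zero velocity at step K, and no vehicle's final position exceeds its position under the original control at step K. -/

import Mathlib

private lemma max0_mono {x y : ℝ} (h : x ≤ y) : max 0 x ≤ max 0 y :=
  max_le_max le_rfl h

private lemma max0_sub_le (x b : ℝ) (hb : 0 ≤ b) : max 0 x - b ≤ max 0 (x - b) := by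
  have h1 := le_max_left 0 (x - b)
  have h2 := le_max_right 0 (x - b)
  have : max 0 x ≤ max 0 (x - b) + b := max_le (by linarith) (by linarith)
  linarith

set_option maxHeartbeats 1600000 in
/-- Proposition 2: `p` vehicles in a line (ordered rear to front) with
admissible collision-free controls over horizon `K` with
`K·τ ≥ v_max/|u_b| + (p−1)(1+⌈u_max/|u_b|⌉)τ + τ` admit an admissible collision-free
control with the same first-step controls under which all vehicles are stopped at
step `K`, with final positions not exceeding the original ones. -/
theorem line_of_vehicles_can_stop (p K : ℕ) (τ vmax ub umax : ℝ)
    (hp : 0 < p) (hτ : 0 < τ) (hvmax : 0 < vmax) (hub : ub < 0) (humax : 0 < umax)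
    (hK : vmax / |ub| + ((p : ℝ) - 1) * (1 + (⌈umax / |ub|⌉₊ : ℝ)) * τ + τ ≤ (K : ℝ) * τ)
    (u s v : Fin p → ℕ → ℝ)
    (hdyn_v : ∀ i k, v i (k + 1) = v i k + u i k * τ)
    (hdyn_s : ∀ i k, s i (k + 1) = s i k + τ / 2 * (v i k + v i (k + 1)))
    (hu : ∀ i, ∀ k < K, u i k ∈ Set.Icc ub umax)
    (hv : ∀ i, ∀ k ≤ K, v i k ∈ Set.Icc 0 vmax)
    (hsafe : ∀ k ≤ K, ∀ i j : Fin p, i < j → s i k < s j k) :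
    ∃ uh sh vh : Fin p → ℕ → ℝ,
      (∀ i, sh i 0 = s i 0 ∧ vh i 0 = v i 0) ∧
      (∀ i k, vh i (k + 1) = vh i k + uh i k * τ) ∧
      (∀ i k, sh i (k + 1) = sh i k + τ / 2 * (vh i k + vh i (k + 1))) ∧
      (∀ i, uh i 0 = u i 0) ∧
      (∀ i, ∀ k < K, uh i k ∈ Set.Icc ub umax) ∧
      (∀ i, ∀ k ≤ K, vh i k ∈ Set.Icc 0 vmax) ∧
      (∀ k ≤ K, ∀ i j : Fin p, i < j → sh i k < sh j k) ∧
      (∀ i, vh i K = 0) ∧ (∀ i, sh i K ≤ s i K) := by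
  classical
  have habs : |ub| = -ub := abs_of_neg hub
  have habs_pos : 0 < |ub| := abs_pos.mpr hub.ne
  set b : ℝ := |ub| * τ with hb_def
  have hb : 0 < b := mul_pos habs_pos hτ
  set Dr : ℝ := 1 + (⌈umax / |ub|⌉₊ : ℝ) with hDr_def
  have hDr1 : 1 ≤ Dr := by
    have h0 : (0:ℝ) ≤ (⌈umax / |ub|⌉₊ : ℝ) := Nat.cast_nonneg _
    rw [hDr_def]; linarith
  have hDrb : b + umax * τ ≤ Dr * b := by
    have h1 : umax / |ub| ≤ (⌈umax / |ub|⌉₊ : ℝ) := Nat.le_ceil _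
    have h2 : umax / |ub| * b = umax * τ := by
      rw [hb_def]; field_simp
    have h3 : umax * τ ≤ (⌈umax / |ub|⌉₊ : ℝ) * b := by
      rw [← h2]; exact mul_le_mul_of_nonneg_right h1 hb.le
    rw [hDr_def]; nlinarith
  -- the envelope offsets
  set c : Fin p → ℝ := fun i => vmax + b + (i.val : ℝ) * (Dr * b) with hc_def
  have hDrb_pos : 0 < Dr * b := by nlinarith
  have hc_lb : ∀ i : Fin p, vmax + b ≤ c i := by
    intro i
    have : (0:ℝ) ≤ (i.val : ℝ) := Nat.cast_nonneg _
    simp only [hc_def]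
    nlinarith
  have hc_mono : ∀ i j : Fin p, i < j → c i + Dr * b ≤ c j := by
    intro i j hij
    have hij' : (i.val : ℝ) + 1 ≤ (j.val : ℝ) := by
      have : i.val + 1 ≤ j.val := hij
      exact_mod_cast this
    simp only [hc_def]
    nlinarith
  have hDrpos : (0:ℝ) ≤ Dr := by linarith
  have hKb : vmax + ((p:ℝ) - 1) * (Dr * b) + b ≤ (K:ℝ) * b := by
    have h := mul_le_mul_of_nonneg_right hK habs_pos.le
    have e1 : (vmax / |ub| + ((p:ℝ) - 1) * Dr * τ + τ) * |ub|
        = vmax + ((p:ℝ) - 1) * (Dr * (|ub| * τ)) + |ub| * τ := by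
      field_simp
    have e2 : (K:ℝ) * τ * |ub| = (K:ℝ) * (|ub| * τ) := by ring
    rw [e1, e2] at h
    rw [hb_def]
    linarith
  have hc_K : ∀ i : Fin p, c i ≤ b * K := by
    intro i
    have hiv : (i.val : ℝ) ≤ (p : ℝ) - 1 := by
      have h5 : (i.val : ℕ) + 1 ≤ p := i.isLt
      have h6 := (Nat.cast_le (α := ℝ)).mpr h5
      push_cast at h6; linarith
    have hstep : (i.val : ℝ) * (Dr * b) ≤ ((p:ℝ) - 1) * (Dr * b) :=
      mul_le_mul_of_nonneg_right hiv (mul_nonneg hDrpos hb.le)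
    have hcm : (K:ℝ) * b = b * (K:ℝ) := mul_comm _ _
    simp only [hc_def]
    linarith
  have hK1 : 1 ≤ K := by
    by_contra h
    push_neg at h
    interval_cases K
    have h1 : 0 < vmax / |ub| := div_pos hvmax habs_pos
    have h2 : (0:ℝ) ≤ ((p : ℝ) - 1) * Dr * τ := by
      have hp1 : (1:ℝ) ≤ (p:ℝ) := by exact_mod_cast hp
      exact mul_nonneg (mul_nonneg (by linarith) (by linarith)) hτ.le
    simp only [Nat.cast_zero, zero_mul] at hK
    nlinarith
  -- envelopes
  set B : Fin p → ℕ → ℝ := fun i k => max 0 (c i - b * k) with hB_def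
  have hBnonneg : ∀ i k, 0 ≤ B i k := fun i k => le_max_left _ _
  have hBmono : ∀ i k, B i (k+1) ≤ B i k := by
    intro i k
    apply max0_mono
    push_cast
    nlinarith
  have hBstep : ∀ i k, B i k - b ≤ B i (k+1) := by
    intro i k
    have := max0_sub_le (c i - b * k) b hb.le
    have he : c i - b * k - b = c i - b * (k+1 : ℕ) := by push_cast; ring
    rw [he] at this
    exact this
  have hBij : ∀ (i j : Fin p), i < j → ∀ k, B i k ≤ B j k := by
    intro i j hij k
    apply max0_mono
    have := hc_mono i j hij
    nlinarith
  -- modified velocities / controls / positions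
  set vh : Fin p → ℕ → ℝ := fun i k => min (v i k) (B i k) with hvh_def
  set uh : Fin p → ℕ → ℝ := fun i k => (vh i (k+1) - vh i k) / τ with huh_def
  set sh : Fin p → ℕ → ℝ :=
    fun i k => s i 0 + ∑ l ∈ Finset.range k, (τ / 2 * (vh i l + vh i (l+1))) with hsh_def
  have hvh_le_v : ∀ i k, vh i k ≤ v i k := fun i k => min_le_left _ _
  have hvh_le_B : ∀ i k, vh i k ≤ B i k := fun i k => min_le_right _ _
  have hvh_nonneg : ∀ i, ∀ k ≤ K, 0 ≤ vh i k := by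
    intro i k hk
    exact le_min (hv i k hk).1 (hBnonneg i k)
  have hvh0 : ∀ i, vh i 0 = v i 0 := by
    intro i
    apply min_eq_left
    have h1 := (hv i 0 (Nat.zero_le K)).2
    have h2 := hc_lb i
    have : c i - b * (0:ℕ) = c i := by push_cast; ring
    simp only [hB_def]
    rw [this]
    exact le_trans (by linarith) (le_max_right _ _)
  have hvh1 : ∀ i, vh i 1 = v i 1 := by
    intro i
    apply min_eq_left
    have h1 := (hv i 1 hK1).2
    have h2 := hc_lb i
    have : c i - b * (1:ℕ) = c i - b := by push_cast; ring
    simp only [hB_def]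
    rw [this]
    exact le_trans (by linarith) (le_max_right _ _)
  have hdynvh : ∀ i k, vh i (k+1) = vh i k + uh i k * τ := by
    intro i k
    simp only [huh_def]
    field_simp
    ring
  have hdynsh : ∀ i k, sh i (k+1) = sh i k + τ / 2 * (vh i k + vh i (k+1)) := by
    intro i k
    simp only [hsh_def, Finset.sum_range_succ]
    ring
  have hsh0 : ∀ i, sh i 0 = s i 0 := by
    intro i; simp [hsh_def]
  -- sum formula for original positions
  have hs_sum : ∀ i k, s i k = s i 0 + ∑ l ∈ Finset.range k, (τ / 2 * (v i l + v i (l+1))) := by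
    intro i k
    induction k with
    | zero => simp
    | succ n ih => rw [Finset.sum_range_succ, hdyn_s i n, ih]; ring
  have hsh_le_s : ∀ i k, sh i k ≤ s i k := by
    intro i k
    rw [hs_sum i k]
    simp only [hsh_def]
    have hterm : ∀ l ∈ Finset.range k,
        τ / 2 * (vh i l + vh i (l+1)) ≤ τ / 2 * (v i l + v i (l+1)) := by
      intro l _
      have h1 := hvh_le_v i l
      have h2 := hvh_le_v i (l+1)
      apply mul_le_mul_of_nonneg_left (by linarith) (by linarith)
    exact add_le_add (le_refl _) (Finset.sum_le_sum hterm)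
  -- control equality at step 0
  have huh0 : ∀ i, uh i 0 = u i 0 := by
    intro i
    simp only [huh_def]
    rw [hvh1 i, hvh0 i, hdyn_v i 0]
    field_simp
    ring
  -- control bounds
  have huh_mem : ∀ i, ∀ k < K, uh i k ∈ Set.Icc ub umax := by
    intro i k hk
    have hu1 := (hu i k hk).1
    have hu2 := (hu i k hk).2
    have hlow : vh i k + ub * τ ≤ vh i (k+1) := by
      have hub_b : ub * τ = -b := by rw [hb_def, habs]; ring
      apply le_min
      · have : v i (k+1) = v i k + u i k * τ := hdyn_v i k
        have : v i k + ub * τ ≤ v i (k+1) := by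
          rw [this]
          have := mul_le_mul_of_nonneg_right hu1 hτ.le
          linarith
        calc vh i k + ub * τ ≤ v i k + ub * τ := by linarith [hvh_le_v i k]
          _ ≤ v i (k+1) := this
      · calc vh i k + ub * τ ≤ B i k + ub * τ := by linarith [hvh_le_B i k]
          _ = B i k - b := by rw [hub_b]; ring
          _ ≤ B i (k+1) := hBstep i k
    have hhigh : vh i (k+1) ≤ vh i k + umax * τ := by
      have hh1 : vh i (k+1) ≤ v i k + umax * τ := by
        have hv1 : v i (k+1) = v i k + u i k * τ := hdyn_v i k
        have hh := mul_le_mul_of_nonneg_right hu2 hτ.le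
        have := hvh_le_v i (k+1)
        linarith
      have hh2 : vh i (k+1) ≤ B i k + umax * τ := by
        have h3 := hvh_le_B i (k+1)
        have h4 := hBmono i k
        have h5 : (0:ℝ) ≤ umax * τ := by positivity
        linarith
      have hmin : vh i (k+1) - umax * τ ≤ vh i k := by
        have g1 : vh i (k+1) - umax * τ ≤ v i k := by linarith
        have g2 : vh i (k+1) - umax * τ ≤ B i k := by linarith
        exact le_min g1 g2
      linarith
    constructor
    · simp only [huh_def]
      rw [le_div_iff₀ hτ]
      linarith
    · simp only [huh_def]
      rw [div_le_iff₀ hτ]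
      linarith
  -- velocity bounds
  have hvh_mem : ∀ i, ∀ k ≤ K, vh i k ∈ Set.Icc 0 vmax := by
    intro i k hk
    exact ⟨hvh_nonneg i k hk, le_trans (hvh_le_v i k) (hv i k hk).2⟩
  -- stopped at K
  have hvhK : ∀ i, vh i K = 0 := by
    intro i
    have hBK : B i K = 0 := by
      simp only [hB_def]
      apply max_eq_left
      have := hc_K i
      nlinarith [hc_K i]
    have := (hv i K le_rfl).1
    simp only [hvh_def]
    rw [hBK]
    exact min_eq_right this
  -- clamp persistence: once the envelope is hit, it stays hit (up to K)
  have hpers : ∀ (j : Fin p) (T l : ℕ), T ≤ l → l ≤ K → B j T ≤ v j T → B j l ≤ v j l := by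
    intro j T l hTl hlK hT
    induction l with
    | zero =>
      have : T = 0 := Nat.le_zero.mp hTl
      subst this; exact hT
    | succ n ih =>
      rcases Nat.lt_or_ge T (n+1) with h | h
      · have hn : T ≤ n := Nat.lt_succ_iff.mp h
        have hnK : n ≤ K := le_trans (Nat.le_succ n) hlK
        have ihn := ih hn (le_trans (Nat.le_succ n) hlK)
        have hstep : v j n - b ≤ v j (n+1) := by
          have hdv := hdyn_v j n
          have hu1 := (hu j n (lt_of_lt_of_le (Nat.lt_succ_self n) hlK)).1
          have := mul_le_mul_of_nonneg_right hu1 hτ.le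
          have hub_b : ub * τ = -b := by rw [hb_def, habs]; ring
          rw [hub_b] at this
          linarith
        have hnn : 0 ≤ v j (n+1) := (hv j (n+1) hlK).1
        simp only [hB_def]
        apply max_le hnn
        have hBn : c j - b * n ≤ v j n := le_trans (le_max_right _ _) ihn
        push_cast
        linarith
      · have : T = n+1 := le_antisymm hTl h
        subst this; exact hT
  -- comparison when the front vehicle is never clamped up to m
  have hfrontfree : ∀ (j : Fin p) (m : ℕ), (∀ l ≤ m, v j l ≤ B j l) → sh j m = s j m := by
    intro j m hfree
    rw [hs_sum j m]
    simp only [hsh_def]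
    congr 1
    apply Finset.sum_congr rfl
    intro l hl
    have hl' : l < m := Finset.mem_range.mp hl
    have e1 : vh j l = v j l := min_eq_left (hfree l hl'.le)
    have e2 : vh j (l+1) = v j (l+1) := min_eq_left (hfree (l+1) hl')
    rw [e1, e2]
  -- MAIN SAFETY
  have hsafety : ∀ k ≤ K, ∀ i j : Fin p, i < j → sh i k < sh j k := by
    intro k hk i j hij
    by_cases hcl : ∀ l ≤ k, v j l ≤ B j l
    · have h1 : sh j k = s j k := hfrontfree j k hcl
      have h2 : sh i k ≤ s i k := hsh_le_s i k
      have h3 := hsafe k hk i j hij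
      linarith
    · push_neg at hcl
      obtain ⟨l₀, hl₀k, hl₀⟩ := hcl
      have hex : ∃ l, B j l < v j l := ⟨l₀, hl₀⟩
      obtain ⟨T, hT_def⟩ : ∃ T, Nat.find hex = T := ⟨_, rfl⟩
      have hTspec : B j T < v j T := hT_def ▸ Nat.find_spec hex
      have hTmin : ∀ l < T, v j l ≤ B j l := fun l hl =>
        le_of_not_gt (Nat.find_min hex (hT_def ▸ hl))
      have hTk : T ≤ k := hT_def ▸ le_trans (Nat.find_le hl₀) hl₀k
      have hTK : T ≤ K := le_trans hTk hk
      have hT1 : 1 ≤ T := by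
        rcases Nat.eq_zero_or_pos T with h0 | h1
        · exfalso
          rw [h0] at hTspec
          have hv0 := (hv j 0 (Nat.zero_le K)).2
          have : v j 0 ≤ B j 0 := by
            simp only [hB_def]
            have h2 := hc_lb j
            refine le_trans ?_ (le_max_right _ _)
            push_cast
            nlinarith
          linarith
        · exact h1
      obtain ⟨T', rfl⟩ : ∃ T'', T = T'' + 1 :=
        ⟨T - 1, (Nat.succ_pred_eq_of_pos hT1).symm⟩
      have hT'k : T' ≤ k := le_trans (Nat.le_succ T') hTk
      have hT'K : T' ≤ K := le_trans hT'k hk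
      -- Step A: positive gap at T'
      have hfreeT' : ∀ l ≤ T', v j l ≤ B j l := fun l hl =>
        hTmin l (Nat.lt_succ_of_le hl)
      have hgapT' : 0 < sh j T' - sh i T' := by
        have h1 : sh j T' = s j T' := hfrontfree j T' hfreeT'
        have h2 : sh i T' ≤ s i T' := hsh_le_s i T'
        have h3 := hsafe T' hT'K i j hij
        linarith
      -- Step B: the key inequality, gap does not decrease from T' to T'+1
      have hgapT : sh j T' - sh i T' ≤ sh j (T'+1) - sh i (T'+1) := by
        have e1 : vh j T' = v j T' := min_eq_left (hfreeT' T' le_rfl)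
        have e2 : vh j (T'+1) = B j (T'+1) := min_eq_right hTspec.le
        have hkey : B i T' + B i (T'+1) ≤ v j T' + B j (T'+1) := by
          set x : ℝ := c j - b * ((T':ℝ) + 1) with hx_def
          have hE : b + umax * τ ≤ c j - c i := le_trans hDrb (by linarith [hc_mono i j hij])
          have hBjT : B j (T'+1) = max 0 x := by
            simp only [hB_def]; push_cast; rfl
          have hBiT : B i (T'+1) = max 0 (x - (c j - c i)) := by
            simp only [hB_def]
            push_cast
            congr 1
            ring
          have hBiT' : B i T' = max 0 (x + b - (c j - c i)) := by
            simp only [hB_def]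
            congr 1
            simp only [hx_def]
            ring
          have hvstep : v j (T'+1) ≤ v j T' + umax * τ := by
            have hdv := hdyn_v j T'
            have hu2 := (hu j T' (lt_of_lt_of_le (Nat.lt_succ_self T') hTK)).2
            have := mul_le_mul_of_nonneg_right hu2 hτ.le
            linarith
          have hvT'0 : 0 ≤ v j T' := (hv j T' hT'K).1
          have hA : max 0 x - umax * τ ≤ v j T' := by
            have : max 0 x ≤ v j (T'+1) := by rw [← hBjT]; exact hTspec.le
            linarith
          have h1 : B i T' ≤ v j T' := by
            rw [hBiT']
            apply max_le hvT'0
            have := le_max_left 0 x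
            have := le_max_right 0 x
            linarith
          have h2 : B i (T'+1) ≤ B j (T'+1) := by
            rw [hBiT, hBjT]
            apply max0_mono
            nlinarith [hb.le, mul_pos humax hτ]
          linarith
        have hi1 : vh i T' ≤ B i T' := hvh_le_B i T'
        have hi2 : vh i (T'+1) ≤ B i (T'+1) := hvh_le_B i (T'+1)
        have hinc : 0 ≤ τ / 2 * ((vh j T' + vh j (T'+1)) - (vh i T' + vh i (T'+1))) := by
          apply mul_nonneg (by linarith)
          rw [e1, e2]
          linarith
        rw [hdynsh j T', hdynsh i T']
        linarith
      -- Step C: gap keeps nondecreasing from T'+1 up to k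
      have hgapC : ∀ m, T' + 1 ≤ m → m ≤ k →
          sh j (T'+1) - sh i (T'+1) ≤ sh j m - sh i m := by
        intro m hm hmk
        induction m with
        | zero => omega
        | succ n ih =>
          rcases Nat.lt_or_ge (T'+1) (n+1) with h | h
          · have hn1 : T' + 1 ≤ n := Nat.lt_succ_iff.mp h
            have hnk : n ≤ k := le_trans (Nat.le_succ n) hmk
            have ihn := ih hn1 hnk
            have hord : ∀ l, T' + 1 ≤ l → l ≤ K → vh i l ≤ vh j l := by
              intro l hl hlK
              have hclamp : B j l ≤ v j l :=
                hpers j (T'+1) l hl hlK hTspec.le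
              have : vh j l = B j l := min_eq_right hclamp
              rw [this]
              exact le_trans (hvh_le_B i l) (hBij i j hij l)
            have ho1 : vh i n ≤ vh j n := hord n hn1 (le_trans hnk hk)
            have ho2 : vh i (n+1) ≤ vh j (n+1) :=
              hord (n+1) (le_trans hn1 (Nat.le_succ n)) (le_trans hmk hk)
            have hstepn : τ / 2 * (vh i n + vh i (n+1)) ≤ τ / 2 * (vh j n + vh j (n+1)) :=
              mul_le_mul_of_nonneg_left (by linarith) (by linarith)
            calc sh j (T'+1) - sh i (T'+1) ≤ sh j n - sh i n := ihn
              _ ≤ (sh j n + τ / 2 * (vh j n + vh j (n+1)))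
                    - (sh i n + τ / 2 * (vh i n + vh i (n+1))) := by linarith [hstepn]
              _ = sh j (n+1) - sh i (n+1) := by rw [hdynsh j n, hdynsh i n]
          · have he : T' + 1 = n + 1 := le_antisymm hm h
            rw [← he]
      have hfinal := hgapC k hTk le_rfl
      linarith
  refine ⟨uh, sh, vh, fun i => ⟨hsh0 i, hvh0 i⟩, hdynvh, hdynsh, huh0, huh_mem, hvh_mem,
    hsafety, hvhK, ?_⟩
  intro i
  exact hsh_le_s i K
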